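/- Let C = ⟨A₁,…,A_{2k}⟩ be a cyclic code over R = F_p[u,v]/⟨u^k, v², uv−vu⟩ and 1 ≤ i ≤ k. Any element of C of the form v·(u^{i−1}p₀(x) + u^i p₁(x) + ⋯ + u^{k−1}p_{k−i}(x)) with p_j(x) ∈ F_p[x] can be written as q₀(x)A_{k+i} + q₁(x)A_{k+i+1} + ⋯ + q_{k−i}(x)A_{2k} for some q₀,…,q_{k−i} ∈ F_p[x]. -/

import Mathlib

set_option synthInstance.maxHeartbeats 1000000

open Polynomial

/-- The ring `F_p[u,v]/⟨u^k, v²⟩` (the variables commute, so `uv - vu = 0` is automatic). -/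
abbrev Rbase (p k : ℕ) : Type :=
  MvPolynomial (Fin 2) (ZMod p) ⧸
    Ideal.span {(MvPolynomial.X 0 : MvPolynomial (Fin 2) (ZMod p)) ^ k, MvPolynomial.X 1 ^ 2}

/-- The image of `u`. -/
noncomputable def uu (p k : ℕ) : Rbase p k := Ideal.Quotient.mk _ (MvPolynomial.X 0)

/-- The image of `v`. -/
noncomputable def vv (p k : ℕ) : Rbase p k := Ideal.Quotient.mk _ (MvPolynomial.X 1)

/-- `R_n = (F_p[u,v]/⟨u^k,v²⟩)[x]/⟨xⁿ−1⟩`, the ambient ring of cyclic codes of length `n`. -/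
abbrev Rn (p k n : ℕ) : Type :=
  Polynomial (Rbase p k) ⧸
    Ideal.span {(Polynomial.X : Polynomial (Rbase p k)) ^ n - 1}

instance instIsTwoSidedRn (p k n : ℕ) :
    (Ideal.span {(Polynomial.X : Polynomial (Rbase p k)) ^ n - 1}).IsTwoSided :=
  ⟨fun b ha => by convert Ideal.mul_mem_left _ b ha using 1; exact @mul_comm (Polynomial (Rbase p k)) _ _ _⟩

noncomputable def uR (p k n : ℕ) : Rn p k n := Ideal.Quotient.mk _ (Polynomial.C (uu p k))
noncomputable def vR (p k n : ℕ) : Rn p k n := Ideal.Quotient.mk _ (Polynomial.C (vv p k))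
noncomputable def xR (p k n : ℕ) : Rn p k n := Ideal.Quotient.mk _ Polynomial.X

/-- The canonical map `F_p[x] → R_n` (coefficientwise inclusion followed by the quotient map). -/
noncomputable def theta (p k n : ℕ) : Polynomial (ZMod p) →+* Rn p k n :=
  (Ideal.Quotient.mk _).comp (Polynomial.mapRingHom (algebraMap (ZMod p) (Rbase p k)))

/-- The set of `f ∈ F_p[x]` representing elements of
`C_i = Tor Res … Res (C) = {f : u^{i-1}·f ∈ C mod ⟨u^i, v⟩}`. -/
def resTorSet (p k n : ℕ) (C : Ideal (Rn p k n)) (i : ℕ) : Set (Polynomial (ZMod p)) :=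
  {f | uR p k n ^ (i - 1) * theta p k n f ∈
        C ⊔ Ideal.span {uR p k n ^ i, vR p k n}}

/-- The set of `f ∈ F_p[x]` representing elements of
`C_{k+i} = Tor Res … Res Tor (C) = {f : u^{i-1}·v·f ∈ C mod ⟨u^i v⟩}`. -/
def torTorSet (p k n : ℕ) (C : Ideal (Rn p k n)) (i : ℕ) : Set (Polynomial (ZMod p)) :=
  {f | uR p k n ^ (i - 1) * vR p k n * theta p k n f ∈
        C ⊔ Ideal.span {uR p k n ^ i * vR p k n}}

/-- `g` is the (monic, minimal-degree) generator of the ideal of `F_p[x]/⟨xⁿ−1⟩` whose set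
of polynomial representatives is `S`. -/
def IsMinGen (p n : ℕ) (S : Set (Polynomial (ZMod p))) (g : Polynomial (ZMod p)) : Prop :=
  g.Monic ∧
  S = {f | ∃ a b : Polynomial (ZMod p), f = g * a + (Polynomial.X ^ n - 1) * b} ∧
  ∀ f ∈ S, f ≠ 0 → g.degree ≤ f.degree

/-- The canonical generator
`A_i = u^{i-1}g_i + u^i g_{ii} + ⋯ + u^{k-1}g_{i(k-1)} + v(g_{ik} + ⋯ + u^{k-1}g_{i(2k-1)})`
as a polynomial over `F_p[u,v]/⟨u^k,v²⟩`, for `1 ≤ i ≤ k`. -/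
noncomputable def Apoly (p k : ℕ) (g : ℕ → Polynomial (ZMod p))
    (gg : ℕ → ℕ → Polynomial (ZMod p)) (i : ℕ) : Polynomial (Rbase p k) :=
  Polynomial.C (uu p k ^ (i - 1)) * (g i).map (algebraMap (ZMod p) (Rbase p k))
    + ∑ j ∈ Finset.Icc i (k - 1),
        Polynomial.C (uu p k ^ j) * (gg i j).map (algebraMap (ZMod p) (Rbase p k))
    + Polynomial.C (vv p k) *
        ∑ j ∈ Finset.Icc k (2 * k - 1),
          Polynomial.C (uu p k ^ (j - k)) * (gg i j).map (algebraMap (ZMod p) (Rbase p k))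

/-- The canonical generator
`A_{k+i} = v(u^{i-1}g_{k+i} + u^i g_{(k+i)(k+i)} + ⋯ + u^{k-1}g_{(k+i)(2k-1)})`
as a polynomial over `F_p[u,v]/⟨u^k,v²⟩`, for `1 ≤ i ≤ k`. -/
noncomputable def AVpoly (p k : ℕ) (g : ℕ → Polynomial (ZMod p))
    (gg : ℕ → ℕ → Polynomial (ZMod p)) (i : ℕ) : Polynomial (Rbase p k) :=
  Polynomial.C (vv p k) *
    (Polynomial.C (uu p k ^ (i - 1)) * (g (k + i)).map (algebraMap (ZMod p) (Rbase p k))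
      + ∑ j ∈ Finset.Icc (k + i) (2 * k - 1),
          Polynomial.C (uu p k ^ (j - k)) * (gg (k + i) j).map (algebraMap (ZMod p) (Rbase p k)))

/-- `A_i` as an element of `R_n`. -/
noncomputable def Aelt (p k n : ℕ) (g : ℕ → Polynomial (ZMod p))
    (gg : ℕ → ℕ → Polynomial (ZMod p)) (i : ℕ) : Rn p k n :=
  Ideal.Quotient.mk _ (Apoly p k g gg i)

/-- `A_{k+i}` as an element of `R_n`. -/
noncomputable def AVelt (p k n : ℕ) (g : ℕ → Polynomial (ZMod p))
    (gg : ℕ → ℕ → Polynomial (ZMod p)) (i : ℕ) : Rn p k n :=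
  Ideal.Quotient.mk _ (AVpoly p k g gg i)

/-- The minimum Hamming weight of a nonzero codeword of `C ⊆ R_n` (weights are computed
on the unique representative of degree `< n`). -/
noncomputable def dHam (p k n : ℕ) (C : Ideal (Rn p k n)) : ℕ :=
  sInf {m | ∃ f : Polynomial (Rbase p k), f ≠ 0 ∧ f.degree < (n : ℕ) ∧
    Ideal.Quotient.mk (Ideal.span {(Polynomial.X : Polynomial (Rbase p k)) ^ n - 1}) f ∈ C ∧
    m = f.support.card}

/-- The minimum Hamming weight of a nonzero codeword of a cyclic code over `F_p` given by a
set `S` of polynomial representatives (closed under adding multiples of `xⁿ−1`). -/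
noncomputable def dHamF (p n : ℕ) (S : Set (Polynomial (ZMod p))) : ℕ :=
  sInf {m | ∃ f : Polynomial (ZMod p), f ≠ 0 ∧ f.degree < (n : ℕ) ∧ f ∈ S ∧
    m = f.support.card}

set_option maxRecDepth 40000
section CommRn

noncomputable abbrev instCommRingRn (p k n : ℕ) : CommRing (Rn p k n) :=
  { toRing := Ideal.Quotient.ring _
    mul_comm := fun a b => by
      obtain ⟨a, rfl⟩ := Ideal.Quotient.mk_surjective a
      obtain ⟨b, rfl⟩ := Ideal.Quotient.mk_surjective b
      rw [← map_mul, ← map_mul, mul_comm a b] }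

theorem instTwoSidedRn (p k n : ℕ) (I : Ideal (Rn p k n)) : I.IsTwoSided :=
  ⟨fun b ha => by
    letI := instCommRingRn p k n
    rw [mul_comm]; exact I.mul_mem_left b ha⟩

attribute [local instance] instTwoSidedRn

section Helpers


variable (p k n : ℕ)

lemma theta_Xn_sub_one : theta p k n (Polynomial.X ^ n - 1) = 0 := by
  have : theta p k n (Polynomial.X ^ n - 1)
      = Ideal.Quotient.mk _ ((Polynomial.X : Polynomial (Rbase p k)) ^ n - 1) := by
    simp [theta, Polynomial.map_sub, Polynomial.map_pow]
  rw [this, Ideal.Quotient.eq_zero_iff_mem]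
  exact Ideal.subset_span rfl

lemma AVelt_eq (g : ℕ → Polynomial (ZMod p)) (gg : ℕ → ℕ → Polynomial (ZMod p)) (i : ℕ) :
    AVelt p k n g gg i =
      vR p k n * (uR p k n ^ (i - 1) * theta p k n (g (k + i))
        + ∑ j ∈ Finset.Icc (k + i) (2 * k - 1),
            uR p k n ^ (j - k) * theta p k n (gg (k + i) j)) := by
  simp only [AVelt, AVpoly, vR, uR, theta, RingHom.comp_apply,
    Polynomial.coe_mapRingHom, Polynomial.C_pow, map_mul, map_add, map_sum, map_pow]

end Helpers

lemma mem_torTor (p k n : ℕ) (C : Ideal (Rn p k n)) (i m : ℕ) (hi1 : 1 ≤ i)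
    (P : ℕ → Polynomial (ZMod p))
    (hE : vR p k n * ∑ j ∈ Finset.range (m + 1),
        uR p k n ^ (i - 1 + j) * theta p k n (P j) ∈ C) :
    P 0 ∈ torTorSet p k n C i := by
  simp only [torTorSet, Set.mem_setOf_eq]
  have hsplit : vR p k n * ∑ j ∈ Finset.range (m + 1),
        uR p k n ^ (i - 1 + j) * theta p k n (P j)
      = uR p k n ^ (i - 1) * vR p k n * theta p k n (P 0)
        + uR p k n ^ i * vR p k n *
            ∑ j ∈ Finset.range m, uR p k n ^ j * theta p k n (P (j + 1)) := by
    rw [Finset.sum_range_succ' (fun j => uR p k n ^ (i - 1 + j) * theta p k n (P j)) m,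
      mul_add, Finset.mul_sum, Finset.mul_sum]
    rw [add_comm]
    congr 1
    · simp only [add_zero]; (letI := instCommRingRn p k n; ring)
    · apply Finset.sum_congr rfl
      intro j _
      have h : i - 1 + (j + 1) = i + j := by omega
      rw [h, pow_add]
      (letI := instCommRingRn p k n; ring)
  have h1 : uR p k n ^ (i - 1) * vR p k n * theta p k n (P 0)
      = vR p k n * ∑ j ∈ Finset.range (m + 1),
          uR p k n ^ (i - 1 + j) * theta p k n (P j)
        - uR p k n ^ i * vR p k n *
            ∑ j ∈ Finset.range m, uR p k n ^ j * theta p k n (P (j + 1)) := by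
    rw [hsplit]; (letI := instCommRingRn p k n; ring)
  rw [h1]
  refine sub_mem (Ideal.mem_sup_left hE) (Ideal.mem_sup_right ?_)
  exact Ideal.mul_mem_right _ _ (Ideal.subset_span rfl)

lemma theta_P0 (p k n : ℕ) (g0 a b f : Polynomial (ZMod p))
    (hab : f = g0 * a + (Polynomial.X ^ n - 1) * b) :
    theta p k n f = theta p k n g0 * theta p k n a := by
  rw [hab, map_add, map_mul, map_mul, theta_Xn_sub_one, zero_mul, add_zero]

set_option maxHeartbeats 4000000 in
lemma aux19 (p k n : ℕ) [Fact p.Prime] (hk : 0 < k) (hn : 0 < n)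
    (C : Ideal (Rn p k n)) (g : ℕ → Polynomial (ZMod p))
    (gg : ℕ → ℕ → Polynomial (ZMod p))
    (htor : ∀ i ∈ Finset.Icc 1 k, IsMinGen p n (torTorSet p k n C i) (g (k + i)))
    (hAV : ∀ i ∈ Finset.Icc 1 k, AVelt p k n g gg i ∈ C) :
    ∀ m i, 1 ≤ i → i ≤ k → k - i = m → ∀ P : ℕ → Polynomial (ZMod p),
      vR p k n * ∑ j ∈ Finset.range (m + 1),
          uR p k n ^ (i - 1 + j) * theta p k n (P j) ∈ C →
      ∃ q : ℕ → Polynomial (ZMod p),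
        vR p k n * ∑ j ∈ Finset.range (m + 1),
            uR p k n ^ (i - 1 + j) * theta p k n (P j)
          = ∑ j ∈ Finset.range (m + 1), theta p k n (q j) * AVelt p k n g gg (i + j) := by
  intro m
  induction m with
  | zero =>
    intro i hi1 hik hm P hE
    have hik' : i = k := by omega
    obtain ⟨-, hset, -⟩ := htor i (Finset.mem_Icc.mpr ⟨hi1, hik⟩)
    have hP0 : P 0 ∈ torTorSet p k n C i := mem_torTor p k n C i 0 hi1 P hE
    rw [hset] at hP0
    obtain ⟨a, b, hab⟩ := hP0
    refine ⟨fun _ => a, ?_⟩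
    have hIcc : Finset.Icc (k + i) (2 * k - 1) = ∅ := Finset.Icc_eq_empty (by omega)
    simp only [Nat.zero_add, Finset.sum_range_one, add_zero]
    rw [AVelt_eq, hIcc, Finset.sum_empty, add_zero,
      theta_P0 p k n (g (k + i)) a b (P 0) hab]
    (letI := instCommRingRn p k n; ring)
  | succ m ih =>
    intro i hi1 hik hm P hE
    have hilt : i < k := by omega
    obtain ⟨-, hset, -⟩ := htor i (Finset.mem_Icc.mpr ⟨hi1, hik⟩)
    have hP0 : P 0 ∈ torTorSet p k n C i := mem_torTor p k n C i (m + 1) hi1 P hE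
    rw [hset] at hP0
    obtain ⟨a, b, hab⟩ := hP0
    set P' : ℕ → Polynomial (ZMod p) := fun t => P (t + 1) - gg (k + i) (k + i + t) * a
      with hP'
    have key : vR p k n * ∑ j ∈ Finset.range (m + 1),
          uR p k n ^ (i + 1 - 1 + j) * theta p k n (P' j)
        = (vR p k n * ∑ j ∈ Finset.range (m + 1 + 1),
            uR p k n ^ (i - 1 + j) * theta p k n (P j))
          - theta p k n a * AVelt p k n g gg i := by
      rw [AVelt_eq]
      rw [show Finset.Icc (k + i) (2 * k - 1) = Finset.Ico (k + i) (2 * k) from by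
        rw [← Finset.Ico_add_one_right_eq_Icc]; congr 1; omega]
      rw [Finset.sum_Ico_eq_sum_range]
      rw [show 2 * k - (k + i) = m + 1 from by omega]
      rw [Finset.sum_range_succ' (fun j => uR p k n ^ (i - 1 + j) * theta p k n (P j)) (m + 1)]
      have e1 : ∀ j : ℕ, i + 1 - 1 + j = i + j := fun j => by omega
      have e2 : ∀ j : ℕ, i - 1 + (j + 1) = i + j := fun j => by omega
      have e3 : ∀ t : ℕ, k + i + t - k = i + t := fun t => by omega
      simp only [e1, e2, e3, add_zero, hP', map_sub, map_mul,
        theta_P0 p k n (g (k + i)) a b (P 0) hab]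
      simp only [Finset.mul_sum, mul_sub, sub_mul, mul_add, add_mul,
        Finset.sum_sub_distrib]
      have hc : (∑ x ∈ Finset.range (m + 1), vR p k n * (uR p k n ^ (i + x) *
              (theta p k n (gg (k + i) (k + i + x)) * theta p k n a)))
          = ∑ x ∈ Finset.range (m + 1), theta p k n a * (vR p k n * (uR p k n ^ (i + x) *
              theta p k n (gg (k + i) (k + i + x)))) :=
        Finset.sum_congr rfl fun x _ => by (letI := instCommRingRn p k n; ring)
      rw [hc]
      (letI := instCommRingRn p k n; ring)
    have hE' : vR p k n * ∑ j ∈ Finset.range (m + 1),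
        uR p k n ^ (i + 1 - 1 + j) * theta p k n (P' j) ∈ C := by
      rw [key]
      exact sub_mem hE (C.mul_mem_left _ (hAV i (Finset.mem_Icc.mpr ⟨hi1, hik⟩)))
    obtain ⟨q', hq'⟩ := ih (i + 1) (by omega) (by omega) (by omega) P' hE'
    refine ⟨fun j => if j = 0 then a else q' (j - 1), ?_⟩
    have hfin : ∑ j ∈ Finset.range (m + 1 + 1),
        theta p k n (if j = 0 then a else q' (j - 1)) * AVelt p k n g gg (i + j)
        = theta p k n a * AVelt p k n g gg i
          + ∑ j ∈ Finset.range (m + 1),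
              theta p k n (q' j) * AVelt p k n g gg (i + 1 + j) := by
      rw [Finset.sum_range_succ'
        (fun j => theta p k n (if j = 0 then a else q' (j - 1)) * AVelt p k n g gg (i + j))
        (m + 1)]
      rw [add_comm]
      congr 1
      · refine Finset.sum_congr rfl fun j _ => ?_
        have h1 : i + (j + 1) = i + 1 + j := by omega
        simp [h1]
    rw [hfin, ← hq']
    rw [key]
    (letI := instCommRingRn p k n; ring)

end CommRn

/-- any element of `C` of the form
`v·(u^{i−1}p₀ + u^i p₁ + ⋯ + u^{k−1}p_{k−i})` with `p_j ∈ F_p[x]` can be written as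
`q₀A_{k+i} + q₁A_{k+i+1} + ⋯ + q_{k−i}A_{2k}` for some `q_j ∈ F_p[x]`. -/
theorem stmt19 (p k n : ℕ) [Fact p.Prime] (hk : 0 < k) (hn : 0 < n)
    (C : Ideal (Rn p k n)) (g : ℕ → Polynomial (ZMod p))
    (gg : ℕ → ℕ → Polynomial (ZMod p))
    (htor : ∀ i ∈ Finset.Icc 1 k, IsMinGen p n (torTorSet p k n C i) (g (k + i)))
    (hAV : ∀ i ∈ Finset.Icc 1 k, AVelt p k n g gg i ∈ C)
    (i : ℕ) (hi1 : 1 ≤ i) (hik : i ≤ k)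
    (P : ℕ → Polynomial (ZMod p))
    (hE : vR p k n * ∑ j ∈ Finset.range (k - i + 1),
        uR p k n ^ (i - 1 + j) * theta p k n (P j) ∈ C) :
    ∃ q : ℕ → Polynomial (ZMod p),
      vR p k n * ∑ j ∈ Finset.range (k - i + 1),
          uR p k n ^ (i - 1 + j) * theta p k n (P j)
        = ∑ j ∈ Finset.range (k - i + 1), theta p k n (q j) * AVelt p k n g gg (i + j) :=
  aux19 p k n hk hn C g gg htor hAV (k - i) i hi1 hik rfl P hE
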